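/- For every feature vector φ ∈ ℝ^d with ‖φ‖ ≤ 1 and every parameter θ = (w_1, …, w_m), the gap between the two-layer ReLU network and its local linearization at the initialization θ_0 = (w_{1,0}, …, w_{m,0}) satisfies |f(θ; φ) − f_0(θ; φ)| ≤ ‖θ − θ_0‖. -/

import Mathlib

/-- for every feature `φ` with `‖φ‖ ≤ 1` and every parameter `θ`,
the gap between the ReLU network and its local linearization at the
initialization `θ₀ = (w_{1,0}, …, w_{m,0})` satisfies
`|f(θ;φ) − f₀(θ;φ)| ≤ ‖θ − θ₀‖`. -/
theorem stmt_6 (m d : ℕ) (hm : 0 < m) (hd : 0 < d)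
    (b : Fin m → ℝ) (hb : ∀ r, b r = 1 ∨ b r = -1)
    (w0 : Fin m → EuclideanSpace ℝ (Fin d))
    (θ0 : PiLp 2 fun _ : Fin m => EuclideanSpace ℝ (Fin d))
    (hθ0 : ∀ r, θ0 r = w0 r)
    (φ : EuclideanSpace ℝ (Fin d)) (hφ : ‖φ‖ ≤ 1)
    (f f0 : (PiLp 2 fun _ : Fin m => EuclideanSpace ℝ (Fin d)) → ℝ)
    (hf : ∀ θ, f θ = (Real.sqrt m)⁻¹ *
      ∑ r, b r * max 0 (inner ℝ (θ r) φ : ℝ))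
    (hf0 : ∀ θ, f0 θ = (Real.sqrt m)⁻¹ *
      ∑ r, b r * (if (0 : ℝ) < inner ℝ (w0 r) φ then (inner ℝ (θ r) φ : ℝ) else 0))
    (θ : PiLp 2 fun _ : Fin m => EuclideanSpace ℝ (Fin d)) :
    |f θ - f0 θ| ≤ ‖θ - θ0‖ := by
  have hsm : (0:ℝ) < Real.sqrt m := Real.sqrt_pos.2 (by exact_mod_cast hm)
  -- per-term bound
  have key : ∀ r : Fin m,
      |b r * max 0 (inner ℝ (θ r) φ : ℝ)
        - b r * (if (0 : ℝ) < inner ℝ (w0 r) φ then (inner ℝ (θ r) φ : ℝ) else 0)|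
      ≤ ‖θ r - θ0 r‖ := by
    intro r
    have hb1 : |b r| = 1 := by rcases hb r with h | h <;> simp [h]
    rw [← mul_sub, abs_mul, hb1, one_mul]
    have hib : |(inner ℝ (θ r - w0 r) φ : ℝ)| ≤ ‖θ r - θ0 r‖ := by
      calc |(inner ℝ (θ r - w0 r) φ : ℝ)| ≤ ‖θ r - w0 r‖ * ‖φ‖ :=
            abs_real_inner_le_norm _ _
        _ ≤ ‖θ r - w0 r‖ * 1 := by
            exact mul_le_mul_of_nonneg_left hφ (norm_nonneg _)
        _ = ‖θ r - θ0 r‖ := by rw [mul_one, hθ0 r]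
    have hsub : (inner ℝ (θ r - w0 r) φ : ℝ) = inner ℝ (θ r) φ - inner ℝ (w0 r) φ :=
      inner_sub_left _ _ _
    set x : ℝ := inner ℝ (θ r) φ
    set y : ℝ := inner ℝ (w0 r) φ
    by_cases hy : (0:ℝ) < y
    · simp only [if_pos hy]
      have : |max 0 x - x| ≤ |x - y| := by
        rcases le_or_gt 0 x with hx | hx
        · simp [max_eq_right hx]
        · rw [max_eq_left hx.le, zero_sub, abs_of_nonneg (by linarith),
            abs_of_nonpos (by linarith)]
          linarith
      exact this.trans (by rw [← hsub]; exact hib)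
    · simp only [if_neg hy]
      push_neg at hy
      have : |max 0 x - 0| ≤ |x - y| := by
        rcases le_or_gt 0 x with hx | hx
        · rw [max_eq_right hx, sub_zero, abs_of_nonneg hx,
            abs_of_nonneg (by linarith)]
          linarith
        · simp [max_eq_left hx.le]
      exact this.trans (by rw [← hsub]; exact hib)
  have hsum : |∑ r, (b r * max 0 (inner ℝ (θ r) φ : ℝ)
        - b r * (if (0 : ℝ) < inner ℝ (w0 r) φ then (inner ℝ (θ r) φ : ℝ) else 0))|
      ≤ ∑ r, ‖θ r - θ0 r‖ :=
    (Finset.abs_sum_le_sum_abs _ _).trans (Finset.sum_le_sum fun r _ => key r)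
  -- Cauchy–Schwarz: ∑ ‖θ r - θ0 r‖ ≤ √m * ‖θ - θ0‖
  have hnorm : ‖θ - θ0‖ = Real.sqrt (∑ r, ‖θ r - θ0 r‖ ^ 2) := by
    rw [PiLp.norm_eq_of_L2]
    congr 1
  have hcs : ∑ r, ‖θ r - θ0 r‖ ≤ Real.sqrt m * ‖θ - θ0‖ := by
    have h1 : (∑ r, ‖θ r - θ0 r‖) ^ 2 ≤ (m : ℝ) * ∑ r, ‖θ r - θ0 r‖ ^ 2 := by
      have := sq_sum_le_card_mul_sum_sq (s := (Finset.univ : Finset (Fin m)))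
        (f := fun r => ‖θ r - θ0 r‖)
      simpa using this
    have h2 : ∑ r, ‖θ r - θ0 r‖ ≤ Real.sqrt ((m : ℝ) * ∑ r, ‖θ r - θ0 r‖ ^ 2) := by
      have hnn : (0:ℝ) ≤ ∑ r, ‖θ r - θ0 r‖ :=
        Finset.sum_nonneg fun r _ => norm_nonneg _
      nlinarith [Real.sq_sqrt (by positivity : (0:ℝ) ≤ (m : ℝ) * ∑ r, ‖θ r - θ0 r‖ ^ 2),
        Real.sqrt_nonneg ((m : ℝ) * ∑ r, ‖θ r - θ0 r‖ ^ 2)]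
    rw [hnorm, ← Real.sqrt_mul (by positivity)]
    exact h2
  rw [hf, hf0, ← mul_sub, ← Finset.sum_sub_distrib, abs_mul,
    abs_of_nonneg (by positivity)]
  calc (Real.sqrt m)⁻¹ * |∑ r, (b r * max 0 (inner ℝ (θ r) φ : ℝ)
        - b r * (if (0 : ℝ) < inner ℝ (w0 r) φ then (inner ℝ (θ r) φ : ℝ) else 0))|
      ≤ (Real.sqrt m)⁻¹ * (Real.sqrt m * ‖θ - θ0‖) := by
        exact mul_le_mul_of_nonneg_left (hsum.trans hcs) (by positivity)
    _ = ‖θ - θ0‖ := by field_simp
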